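/- Let K be an algebraically closed field and let G_1, ..., G_n ∈ K[λ_1, ..., λ_n] be homogeneous polynomials of degree d-1 with d ≥ 3, satisfying the Euler-type relation ∑_{i=1}^n λ_i G_i = 0 identically. Then G_1, ..., G_n have a common nontrivial zero in K^n \ {0}. -/

import Mathlib

open MvPolynomial

namespace Stmt8Aux

variable {K : Type*} [Field K] {n : ℕ}

/-- The ideal generated by `N`-th powers of the variables indexed by `U`. -/
noncomputable def PU (U : Set (Fin n)) (N : ℕ) : Ideal (MvPolynomial (Fin n) K) :=
  Ideal.span ((fun l => (X l : MvPolynomial (Fin n) K) ^ N) '' U)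

lemma coeff_eq_zero_of_mem_PU {U : Set (Fin n)} {N : ℕ} {f : MvPolynomial (Fin n) K}
    (hf : f ∈ PU U N) {β : Fin n →₀ ℕ} (hβ : ∀ l ∈ U, β l < N) :
    coeff β f = 0 := by
  have main : ∀ g ∈ PU (K := K) U N, ∀ γ : Fin n →₀ ℕ,
      (∀ l ∈ U, γ l < N) → coeff γ g = 0 := by
    intro g hg
    induction hg using Submodule.span_induction with
    | mem x hx =>
        obtain ⟨l, hlU, rfl⟩ := hx
        intro γ hγ
        show coeff γ (X l ^ N) = 0
        rw [X_pow_eq_monomial, coeff_monomial, if_neg]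
        intro h
        have h1 : γ l = N := by rw [← h, Finsupp.single_eq_same]
        have h2 := hγ l hlU
        omega
    | zero => simp
    | add x y hx hy ihx ihy => intro γ hγ; simp [coeff_add, ihx γ hγ, ihy γ hγ]
    | smul a x hx ih =>
        intro γ hγ
        rw [smul_eq_mul, coeff_mul]
        apply Finset.sum_eq_zero
        rintro ⟨u, v⟩ huv
        have huv' : u + v = γ := Finset.HasAntidiagonal.mem_antidiagonal.mp huv
        have hv : ∀ l ∈ U, v l < N := by
          intro l hl
          have h1 : v l ≤ γ l := by rw [← huv']; simp
          exact lt_of_le_of_lt h1 (hγ l hl)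
        rw [ih v hv, mul_zero]
  exact main f hf β hβ

lemma mem_PU_of {U : Set (Fin n)} {N : ℕ} {f : MvPolynomial (Fin n) K}
    (h : ∀ β ∈ f.support, ∃ l ∈ U, N ≤ β l) : f ∈ PU U N := by
  nth_rewrite 1 [as_sum f]
  apply Ideal.sum_mem
  intro β hβ
  obtain ⟨l, hlU, hl⟩ := h β hβ
  have hle : Finsupp.single l N ≤ β := Finsupp.single_le_iff.mpr hl
  have key : monomial β (coeff β f)
      = X l ^ N * monomial (β - Finsupp.single l N) (coeff β f) := by
    rw [X_pow_eq_monomial, monomial_mul, one_mul, add_tsub_cancel_of_le hle]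
  rw [key]
  exact Ideal.mul_mem_right _ _ (Ideal.subset_span ⟨l, hlU, rfl⟩)

lemma mem_PU_of_mul_X {U : Set (Fin n)} {N : ℕ} {m : Fin n} (hm : m ∉ U)
    {f : MvPolynomial (Fin n) K} (h : f * X m ∈ PU U N) : f ∈ PU U N := by
  apply mem_PU_of
  intro β hβ
  by_contra hc
  push_neg at hc
  have hβ' : ∀ l ∈ U, ((β + Finsupp.single m 1 : Fin n →₀ ℕ)) l < N := by
    intro l hl
    have hlm : l ≠ m := fun e => hm (e ▸ hl)
    have : ((β + Finsupp.single m 1 : Fin n →₀ ℕ)) l = β l := by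
      rw [Finsupp.add_apply, Finsupp.single_apply, if_neg (Ne.symm hlm), add_zero]
    rw [this]
    exact hc l hl
  have h0 := coeff_eq_zero_of_mem_PU h hβ'
  rw [coeff_mul_X] at h0
  exact mem_support_iff.mp hβ h0

lemma syz_mem_PU {N : ℕ} (b : Fin n → MvPolynomial (Fin n) K)
    (hb : ∑ k, b k * X k ^ N = 0) (k : Fin n) : b k ∈ PU Set.univ N := by
  apply mem_PU_of
  intro β hβ
  by_contra hc
  push_neg at hc
  have hc' : ∀ l, β l < N := fun l => hc l (Set.mem_univ l)
  have h0 : coeff (β + Finsupp.single k N) (∑ j, b j * X j ^ N) = 0 := by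
    rw [hb]; simp
  rw [coeff_sum] at h0
  rw [Finset.sum_eq_single k] at h0
  · rw [X_pow_eq_monomial, coeff_mul_monomial', if_pos (le_add_self), add_tsub_cancel_right,
      mul_one] at h0
    exact mem_support_iff.mp hβ h0
  · intro j _ hj
    rw [X_pow_eq_monomial, coeff_mul_monomial', if_neg]
    intro hle
    have : N ≤ ((β + Finsupp.single k N : Fin n →₀ ℕ)) j := by
      have := Finsupp.single_le_iff.mp hle
      exact this
    rw [Finsupp.add_apply, Finsupp.single_apply, if_neg (Ne.symm hj), add_zero] at this
    exact absurd this (not_le.mpr (hc' j))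
  · intro h; exact absurd (Finset.mem_univ k) h

lemma prod_monomial_one {ι : Type*} (s : Finset ι) (g : ι → (Fin n →₀ ℕ)) :
    (∏ i ∈ s, monomial (g i) (1 : K)) = monomial (∑ i ∈ s, g i) 1 := by
  classical
  induction s using Finset.induction with
  | empty => simp [monomial_zero', C_1]
  | insert _ _ h ih => rw [Finset.prod_insert h, Finset.sum_insert h, ih, monomial_mul, one_mul]

lemma sigma_not_mem_PU {N : ℕ} (hN : 1 ≤ N)
    (hs : (∏ k : Fin n, (X k : MvPolynomial (Fin n) K) ^ (N - 1)) ∈ PU Set.univ N) :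
    False := by
  classical
  set β₀ : Fin n →₀ ℕ := ∑ k : Fin n, Finsupp.single k (N - 1) with hβ₀
  have hβ₀l : ∀ l : Fin n, β₀ l = N - 1 := by
    intro l
    rw [hβ₀, Finsupp.finset_sum_apply]
    rw [Finset.sum_eq_single l]
    · exact Finsupp.single_eq_same
    · intro j _ hj
      exact Finsupp.single_eq_of_ne (Ne.symm hj)
    · intro h; exact absurd (Finset.mem_univ l) h
  have hmon : (∏ k : Fin n, (X k : MvPolynomial (Fin n) K) ^ (N - 1))
      = monomial β₀ 1 := by
    simp_rw [X_pow_eq_monomial]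
    exact prod_monomial_one _ _
  have h1 : coeff β₀ (∏ k : Fin n, (X k : MvPolynomial (Fin n) K) ^ (N - 1)) = 1 := by
    rw [hmon, coeff_monomial, if_pos rfl]
  have h0 : coeff β₀ (∏ k : Fin n, (X k : MvPolynomial (Fin n) K) ^ (N - 1)) = 0 := by
    apply coeff_eq_zero_of_mem_PU hs
    intro l _
    rw [hβ₀l l]
    omega
  rw [h1] at h0
  exact one_ne_zero h0

lemma det_not_mem_PU {N : ℕ} (hN : 1 ≤ N)
    (M : Matrix (Fin n) (Fin n) (MvPolynomial (Fin n) K))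
    (hM : ∀ k, ∑ j, M k j * X j = X k ^ N) :
    M.det ∉ PU Set.univ N := by
  classical
  intro hmem
  set M₀ : Matrix (Fin n) (Fin n) (MvPolynomial (Fin n) K) :=
    Matrix.diagonal (fun k => X k ^ (N - 1)) with hM₀def
  have hM₀row : ∀ k, ∑ j, M₀ k j * X j = X k ^ N := by
    intro k
    rw [Finset.sum_eq_single k]
    · rw [hM₀def, Matrix.diagonal_apply_eq, ← pow_succ, Nat.sub_add_cancel hN]
    · intro j _ hj
      rw [hM₀def, Matrix.diagonal_apply_ne _ (Ne.symm hj), zero_mul]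
    · intro h; exact absurd (Finset.mem_univ k) h
  set W : Matrix (Fin n) (Fin n) (MvPolynomial (Fin n) K) := M - M₀ with hWdef
  have hWrow : ∀ k, ∑ j, W k j * X j = 0 := by
    intro k
    have h1 : ∑ j, (M k j - M₀ k j) * X j
        = (∑ j, M k j * X j) - (∑ j, M₀ k j * X j) := by
      rw [← Finset.sum_sub_distrib]
      apply Finset.sum_congr rfl
      intro j _
      ring
    rw [hM k, hM₀row k, sub_self] at h1
    simpa [hWdef, Matrix.sub_apply] using h1
  -- multilinear expansion of the determinant over rows
  have hsplit : (W : Fin n → Fin n → MvPolynomial (Fin n) K) + M₀ = M := by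
    funext i j
    simp [hWdef, Matrix.sub_apply]
  have hexp : M.det = ∑ T : Finset (Fin n),
      (Matrix.detRowAlternating (T.piecewise W M₀) : MvPolynomial (Fin n) K) := by
    have h1 : M.det = Matrix.detRowAlternating
        ((W : Fin n → Fin n → MvPolynomial (Fin n) K) + M₀) := by
      rw [hsplit]; rfl
    rw [h1]
    exact Matrix.detRowAlternating.toMultilinearMap.map_add_univ W M₀
  -- the empty-set term is the diagonal determinant
  have hempty : (Matrix.detRowAlternating
      ((∅ : Finset (Fin n)).piecewise W M₀) : MvPolynomial (Fin n) K)
      = ∏ k : Fin n, X k ^ (N - 1) := by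
    rw [show (∅ : Finset (Fin n)).piecewise W M₀ = M₀ from Finset.piecewise_empty _ _]
    have : (Matrix.detRowAlternating (M₀ : Fin n → Fin n → MvPolynomial (Fin n) K)) = M₀.det := rfl
    rw [this, hM₀def, Matrix.det_diagonal]
  -- every other term lies in the ideal
  have hT : ∀ T : Finset (Fin n), T.Nonempty →
      (Matrix.detRowAlternating (T.piecewise W M₀) : MvPolynomial (Fin n) K)
        ∈ PU Set.univ N := by
    intro T hTne
    set Q : Matrix (Fin n) (Fin n) (MvPolynomial (Fin n) K) :=
      Matrix.of (T.piecewise W M₀) with hQdef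
    have hdetQ : (Matrix.detRowAlternating (T.piecewise W M₀) :
        MvPolynomial (Fin n) K) = Q.det := rfl
    set xv : Fin n → MvPolynomial (Fin n) K := fun j => X j with hxv
    set v : Fin n → MvPolynomial (Fin n) K :=
      fun k => if k ∈ T then 0 else X k ^ N with hv
    have h1 : Q.mulVec xv = v := by
      funext k
      show ∑ j, Q k j * xv j = v k
      by_cases hk : k ∈ T
      · have hrow : Q k = W k := by
          rw [hQdef]
          show T.piecewise W M₀ k = W k
          exact Finset.piecewise_eq_of_mem _ _ _ hk
        rw [hv]
        simp only [hk, if_true]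
        rw [show (∑ j, Q k j * xv j) = ∑ j, W k j * X j by
          apply Finset.sum_congr rfl; intro j _; rw [hrow]]
        exact hWrow k
      · have hrow : Q k = M₀ k := by
          rw [hQdef]
          show T.piecewise W M₀ k = M₀ k
          exact Finset.piecewise_eq_of_notMem _ _ _ hk
        rw [hv]
        simp only [hk, if_false]
        rw [show (∑ j, Q k j * xv j) = ∑ j, M₀ k j * X j by
          apply Finset.sum_congr rfl; intro j _; rw [hrow]]
        exact hM₀row k
    have h2 : Q.det • xv = Q.adjugate.mulVec v := by
      rw [← h1, Matrix.mulVec_mulVec, Matrix.adjugate_mul, Matrix.smul_mulVec,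
        Matrix.one_mulVec]
    have h3 : ∀ m', Q.det * X m' ∈ PU (↑T : Set (Fin n))ᶜ N := by
      intro m'
      have h4 : Q.det * X m' = ∑ l, Q.adjugate m' l * v l := by
        have := congrFun h2 m'
        rw [Pi.smul_apply, smul_eq_mul] at this
        rw [this]
        rfl
      rw [h4]
      apply Ideal.sum_mem
      intro l _
      by_cases hl : l ∈ T
      · rw [hv]; simp only [hl, if_true, mul_zero]; exact Ideal.zero_mem _
      · rw [hv]; simp only [hl, if_false]
        exact Ideal.mul_mem_left _ _ (Ideal.subset_span ⟨l, by simpa using hl, rfl⟩)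
    obtain ⟨m, hmT⟩ := hTne
    have h5 : Q.det ∈ PU (↑T : Set (Fin n))ᶜ N :=
      mem_PU_of_mul_X (by simpa using hmT) (h3 m)
    rw [hdetQ]
    exact Ideal.span_mono (Set.image_mono (Set.subset_univ _)) h5
  -- conclude
  have hsum := Finset.sum_erase_add Finset.univ
    (fun T : Finset (Fin n) => (Matrix.detRowAlternating (T.piecewise W M₀) :
      MvPolynomial (Fin n) K)) (Finset.mem_univ (∅ : Finset (Fin n)))
  have hσ : (∏ k : Fin n, (X k : MvPolynomial (Fin n) K) ^ (N - 1)) ∈ PU Set.univ N := by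
    rw [← hempty]
    have : (Matrix.detRowAlternating ((∅ : Finset (Fin n)).piecewise W M₀) :
        MvPolynomial (Fin n) K)
        = M.det - ∑ T ∈ Finset.univ.erase (∅ : Finset (Fin n)),
            (Matrix.detRowAlternating (T.piecewise W M₀) : MvPolynomial (Fin n) K) := by
      rw [hexp, ← hsum]
      ring
    rw [this]
    apply Submodule.sub_mem _ hmem
    apply Ideal.sum_mem
    intro T hTmem
    exact hT T (Finset.nonempty_iff_ne_empty.mpr (Finset.mem_erase.mp hTmem).1)
  exact sigma_not_mem_PU hN hσ

/-- Every polynomial all of whose monomials are nonconstant can be written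
as `∑ m, X m * a m`, where the supports of the `a m` are shifts of that of `f`. -/
lemma exists_decomp (hn : 1 ≤ n) (f : MvPolynomial (Fin n) K)
    (hf : ∀ β ∈ f.support, β ≠ 0) :
    ∃ a : Fin n → MvPolynomial (Fin n) K,
      f = ∑ m, X m * a m ∧
      ∀ m, ∀ γ ∈ (a m).support, γ + Finsupp.single m 1 ∈ f.support := by
  classical
  set c : (Fin n →₀ ℕ) → Fin n := fun β =>
    if h : β.support.Nonempty then β.support.min' h else ⟨0, hn⟩ with hc
  have hcmem : ∀ β ∈ f.support, c β ∈ β.support := by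
    intro β hβ
    have hne : β.support.Nonempty := Finsupp.support_nonempty_iff.mpr (hf β hβ)
    rw [hc]
    simp only [hne, dif_pos]
    exact Finset.min'_mem _ _
  have hle : ∀ β ∈ f.support, Finsupp.single (c β) 1 ≤ β := by
    intro β hβ
    rw [Finsupp.single_le_iff]
    exact Nat.one_le_iff_ne_zero.mpr (Finsupp.mem_support_iff.mp (hcmem β hβ))
  refine ⟨fun m => ∑ β ∈ f.support.filter (fun β => c β = m),
      monomial (β - Finsupp.single m 1) (coeff β f), ?_, ?_⟩
  · have key : ∀ m, ∀ β ∈ f.support.filter (fun β => c β = m),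
        X m * monomial (β - Finsupp.single m 1) (coeff β f)
          = monomial β (coeff β f) := by
      intro m β hβ
      obtain ⟨hβs, hβc⟩ := Finset.mem_filter.mp hβ
      have h1 : (X m : MvPolynomial (Fin n) K) = monomial (Finsupp.single m 1) 1 := by
        rw [← X_pow_eq_monomial, pow_one]
      rw [h1, monomial_mul, one_mul, add_tsub_cancel_of_le (hβc ▸ hle β hβs)]
    calc f = ∑ β ∈ f.support, monomial β (coeff β f) := as_sum f
      _ = ∑ β ∈ f.support.filter (fun β => c β ∈ Finset.univ), monomial β (coeff β f) := by
          rw [Finset.filter_true_of_mem]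
          intro β _
          exact Finset.mem_univ _
      _ = ∑ m, ∑ β ∈ f.support.filter (fun β => c β = m), monomial β (coeff β f) := by
          rw [Finset.sum_fiberwise_eq_sum_filter]
      _ = ∑ m, X m * ∑ β ∈ f.support.filter (fun β => c β = m),
            monomial (β - Finsupp.single m 1) (coeff β f) := by
          apply Finset.sum_congr rfl
          intro m _
          rw [Finset.mul_sum]
          exact (Finset.sum_congr rfl (key m)).symm
  · intro m γ hγ
    have hne : coeff γ (∑ β ∈ f.support.filter (fun β => c β = m),
        monomial (β - Finsupp.single m 1) (coeff β f)) ≠ 0 :=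
      Finsupp.mem_support_iff.mp hγ
    rw [coeff_sum] at hne
    obtain ⟨β, hβmem, hβne⟩ := Finset.exists_ne_zero_of_sum_ne_zero hne
    obtain ⟨hβs, hβc⟩ := Finset.mem_filter.mp hβmem
    rw [coeff_monomial] at hβne
    have heq : β - Finsupp.single m 1 = γ := by
      by_contra hne'
      rw [if_neg hne'] at hβne
      exact hβne rfl
    have : γ + Finsupp.single m 1 = β := by
      rw [← heq, tsub_add_cancel_of_le (hβc ▸ hle β hβs)]
    rw [this]
    exact hβs

end Stmt8Aux

open Stmt8Aux in
theorem stmt8 {K : Type*} [Field K] [IsAlgClosed K]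
    (n d : ℕ) (hn : 1 ≤ n) (hd : 3 ≤ d)
    (G : Fin n → MvPolynomial (Fin n) K)
    (hhom : ∀ i, (G i).IsHomogeneous (d - 1))
    (hrel : ∑ i, MvPolynomial.X i * G i = 0) :
    ∃ x : Fin n → K, x ≠ 0 ∧ ∀ i, MvPolynomial.eval x (G i) = 0 := by
  classical
  by_contra hcon
  push_neg at hcon
  set I : Ideal (MvPolynomial (Fin n) K) := Ideal.span (Set.range G) with hI
  have hzl : MvPolynomial.zeroLocus K I ⊆ {0} := by
    intro x hx
    by_contra hx0
    obtain ⟨i, hi⟩ := hcon x (by simpa using hx0)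
    exact hi (hx _ (Ideal.subset_span ⟨i, rfl⟩))
  have hrad : ∀ k : Fin n, ∃ N : ℕ, (X k : MvPolynomial (Fin n) K) ^ N ∈ I := by
    intro k
    have h1 : (X k : MvPolynomial (Fin n) K)
        ∈ MvPolynomial.vanishingIdeal K (MvPolynomial.zeroLocus K I) := by
      rw [MvPolynomial.mem_vanishingIdeal_iff]
      intro x hx
      have hx0 : x = 0 := hzl hx
      rw [hx0]
      simp
    rw [MvPolynomial.vanishingIdeal_zeroLocus_eq_radical] at h1
    exact Ideal.mem_radical_iff.mp h1
  choose N0 hN0 using hrad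
  set N : ℕ := (Finset.univ.sup N0) + 1 with hNdef
  have hN1 : 1 ≤ N := Nat.le_add_left 1 _
  have hXN : ∀ k : Fin n, (X k : MvPolynomial (Fin n) K) ^ N ∈ I := by
    intro k
    have hle : N0 k ≤ N :=
      le_trans (Finset.le_sup (Finset.mem_univ k)) (Nat.le_succ _)
    have h2 : (X k : MvPolynomial (Fin n) K) ^ N
        = X k ^ (N - N0 k) * X k ^ (N0 k) := by
      rw [← pow_add, Nat.sub_add_cancel hle]
    rw [h2]
    exact Ideal.mul_mem_left _ _ (hN0 k)
  have hCex : ∀ k : Fin n, ∃ c : Fin n → MvPolynomial (Fin n) K,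
      ∑ j, c j * G j = X k ^ N := by
    intro k
    have h3 := hXN k
    rw [hI, Ideal.mem_span_range_iff_exists_fun] at h3
    exact h3
  choose Cf hC using hCex
  set Cmat : Matrix (Fin n) (Fin n) (MvPolynomial (Fin n) K) := Matrix.of Cf with hCmat
  have hsupdeg : ∀ j, ∀ β ∈ (G j).support, Finsupp.degree β = d - 1 := by
    intro j β hβ
    by_contra hne
    exact MvPolynomial.mem_support_iff.mp hβ ((hhom j).coeff_eq_zero hne)
  have hAex : ∀ j, ∃ a : Fin n → MvPolynomial (Fin n) K,
      G j = ∑ m, X m * a m ∧ ∀ m, MvPolynomial.constantCoeff (a m) = 0 := by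
    intro j
    obtain ⟨a, ha1, ha2⟩ := exists_decomp hn (G j) (fun β hβ h0 => by
      have hdegβ := hsupdeg j β hβ
      rw [h0, map_zero] at hdegβ
      omega)
    refine ⟨a, ha1, ?_⟩
    intro m
    by_contra h0
    have h0' : (0 : Fin n →₀ ℕ) ∈ (a m).support := by
      rw [MvPolynomial.mem_support_iff]
      rw [MvPolynomial.constantCoeff_eq] at h0
      exact h0
    have h1 := ha2 m 0 h0'
    rw [zero_add] at h1
    have hdeg := hsupdeg j _ h1
    have h2 : Finsupp.degree (Finsupp.single m (1:ℕ)) = 1 := by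
      rw [Finsupp.degree_single]
    omega
  choose Af hA1 hA2 using hAex
  set Amat : Matrix (Fin n) (Fin n) (MvPolynomial (Fin n) K) := Matrix.of Af with hAmat
  have hArow : ∀ l, ∑ j, Amat l j * X j = G l := by
    intro l
    rw [hA1 l]
    apply Finset.sum_congr rfl
    intro j _
    rw [mul_comm]
    rfl
  set Mmat := Cmat * Amat with hMmat
  have hMrow : ∀ k, ∑ j, Mmat k j * X j = X k ^ N := by
    intro k
    have h1 : ∑ j, Mmat k j * X j = ∑ j, (∑ l, Cmat k l * Amat l j) * X j := by
      apply Finset.sum_congr rfl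
      intro j _
      rw [hMmat, Matrix.mul_apply]
    rw [h1]
    have h2 : ∑ j, (∑ l, Cmat k l * Amat l j) * X j
        = ∑ l, Cmat k l * (∑ j, Amat l j * X j) := by
      simp_rw [Finset.sum_mul]
      rw [Finset.sum_comm]
      simp_rw [Finset.mul_sum, mul_assoc]
    rw [h2]
    have h3 : ∑ l, Cmat k l * (∑ j, Amat l j * X j) = ∑ l, Cmat k l * G l := by
      apply Finset.sum_congr rfl
      intro l _
      rw [hArow l]
    rw [h3]
    exact hC k
  set Δ := Cmat.det with hΔ
  set adjC := Cmat.adjugate with hadjC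
  have hadj : adjC * Cmat = Δ • (1 : Matrix (Fin n) (Fin n) (MvPolynomial (Fin n) K)) :=
    Matrix.adjugate_mul _
  have hΔG : ∀ j, ∑ k, adjC j k * X k ^ N = Δ * G j := by
    intro j
    have h1 : ∑ k, adjC j k * X k ^ N = ∑ k, adjC j k * (∑ l, Cmat k l * G l) := by
      apply Finset.sum_congr rfl
      intro k _
      rw [← hC k]
      rfl
    rw [h1]
    have h2 : ∑ k, adjC j k * (∑ l, Cmat k l * G l)
        = ∑ l, (∑ k, adjC j k * Cmat k l) * G l := by
      simp_rw [Finset.mul_sum]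
      rw [Finset.sum_comm]
      simp_rw [Finset.sum_mul, mul_assoc]
    rw [h2]
    have h3 : ∀ l, (∑ k, adjC j k * Cmat k l) = (adjC * Cmat) j l := by
      intro l
      rw [Matrix.mul_apply]
    have h4 : ∑ l, (∑ k, adjC j k * Cmat k l) * G l
        = ∑ l, ((Δ • (1 : Matrix (Fin n) (Fin n) (MvPolynomial (Fin n) K))) j l) * G l := by
      apply Finset.sum_congr rfl
      intro l _
      rw [h3 l, hadj]
    rw [h4]
    rw [Finset.sum_eq_single j]
    · simp
    · intro l _ hl
      simp [Matrix.one_apply, Ne.symm hl]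
    · intro h
      exact absurd (Finset.mem_univ j) h
  set b : Fin n → MvPolynomial (Fin n) K := fun k => ∑ j, X j * adjC j k with hb
  have hb0 : ∑ k, b k * X k ^ N = 0 := by
    calc ∑ k, b k * X k ^ N = ∑ k, ∑ j, X j * adjC j k * X k ^ N := by
          simp_rw [hb, Finset.sum_mul]
      _ = ∑ j, X j * (∑ k, adjC j k * X k ^ N) := by
          rw [Finset.sum_comm]
          simp_rw [Finset.mul_sum, mul_assoc]
      _ = ∑ j, X j * (Δ * G j) := by simp_rw [hΔG]
      _ = Δ * ∑ j, X j * G j := by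
          rw [Finset.mul_sum]
          apply Finset.sum_congr rfl
          intro j _
          ring
      _ = 0 := by rw [hrel, mul_zero]
  have hbF : ∀ k, b k ∈ PU (Set.univ) N := syz_mem_PU b hb0
  have hΔX : ∀ m, Δ * X m ∈ PU (Set.univ : Set (Fin n)) N := by
    intro m
    have h1 : ∑ k, Cmat k m * b k = Δ * X m := by
      calc ∑ k, Cmat k m * b k = ∑ k, ∑ j, Cmat k m * (X j * adjC j k) := by
            simp_rw [hb, Finset.mul_sum]
        _ = ∑ j, X j * (∑ k, adjC j k * Cmat k m) := by
            rw [Finset.sum_comm]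
            apply Finset.sum_congr rfl
            intro j _
            rw [Finset.mul_sum]
            apply Finset.sum_congr rfl
            intro k _
            ring
        _ = ∑ j, X j * ((adjC * Cmat) j m) := by
            simp_rw [Matrix.mul_apply]
        _ = Δ * X m := by
            rw [hadj]
            rw [Finset.sum_eq_single m]
            · simp [mul_comm]
            · intro l _ hl
              simp [Matrix.one_apply, hl]
            · intro h
              exact absurd (Finset.mem_univ m) h
    rw [← h1]
    exact Ideal.sum_mem _ (fun k _ => Ideal.mul_mem_left _ _ (hbF k))
  have hconstA : MvPolynomial.constantCoeff (Amat.det) = 0 := by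
    have h1 : MvPolynomial.constantCoeff (Amat.det)
        = (Amat.map MvPolynomial.constantCoeff).det := RingHom.map_det _ _
    rw [h1]
    have h2 : Amat.map MvPolynomial.constantCoeff = 0 := by
      ext l m
      simp only [Matrix.map_apply, Matrix.zero_apply]
      exact hA2 l m
    rw [h2]
    haveI : Nonempty (Fin n) := ⟨⟨0, hn⟩⟩
    exact Matrix.det_zero
  obtain ⟨t, ht1, -⟩ := exists_decomp hn Amat.det (fun β hβ h0 => by
    have hne := MvPolynomial.mem_support_iff.mp hβ
    rw [h0] at hne
    rw [MvPolynomial.constantCoeff_eq] at hconstA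
    exact hne hconstA)
  have hdetM_mem : Mmat.det ∈ PU (Set.univ : Set (Fin n)) N := by
    rw [hMmat, Matrix.det_mul, ht1, Finset.mul_sum]
    apply Ideal.sum_mem
    intro m _
    have h5 : Δ * (X m * t m) = (Δ * X m) * t m := by ring
    rw [h5]
    exact Ideal.mul_mem_right _ _ (hΔX m)
  exact det_not_mem_PU hN1 Mmat hMrow hdetM_mem
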